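/- Let L > 0 and let f_1, …, f_n : ℝ^d → ℝ be differentiable with L-Lipschitz gradients. Let x, x' ∈ ℝ^{nd} with blocks x_i, x'_i and block averages x̄, x̄', and let ∇F(x) ∈ ℝ^{nd} denote the stacked vector whose i-th block is ∇f_i(x_i). Then ‖∇F(x) − ∇F(x')‖₂² ≤ 2L²·‖x − 1_n ⊗ x̄‖₂² + 2L²·‖x' − 1_n ⊗ x̄'‖₂² + n·L²·‖x̄ − x̄'‖₂². -/

import Mathlib

open Finset

noncomputable section

/-- `ℝ^d` as a Euclidean space. -/
abbrev Vec (d : ℕ) := EuclideanSpace ℝ (Fin d)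

/-- `ℝ^{nd}` as a stack of `n` blocks in `ℝ^d`, with the Euclidean (ℓ₂) norm. -/
abbrev Stacked (n d : ℕ) := PiLp 2 (fun _ : Fin n => Vec d)

/-- Block average `x̄ = (1/n) Σᵢ xᵢ` of a stacked vector. -/
def blockAvg {n d : ℕ} (x : Stacked n d) : Vec d := (n : ℝ)⁻¹ • ∑ i, x i

/-- The stacked vector `1ₙ ⊗ y` whose every block equals `y`. -/
def stack (n : ℕ) {d : ℕ} (y : Vec d) : Stacked n d := WithLp.toLp 2 (fun _ => y)

/-- The distributed gradient `∇F(x)`, whose `i`-th block is `∇fᵢ(xᵢ)`. -/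
def gradStack {n d : ℕ} (f : Fin n → Vec d → ℝ) (x : Stacked n d) : Stacked n d :=
  WithLp.toLp 2 (fun i => gradient (f i) (x i))

/-- For `f₁,…,fₙ` with `L`-Lipschitz gradients,
`‖∇F(x) − ∇F(x')‖² ≤ 2L²‖x − 1ₙ⊗x̄‖² + 2L²‖x' − 1ₙ⊗x̄'‖² + nL²‖x̄ − x̄'‖²`. -/
lemma sum_sub_blockAvg {n d : ℕ} (x : Stacked n d) :
    ∑ i, (x i - blockAvg x) = (0 : Vec d) := by
  rcases Nat.eq_zero_or_pos n with h | h
  · subst h; simp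
  · have hn : (n:ℝ) ≠ 0 := by positivity
    simp [blockAvg, Finset.sum_sub_distrib, Finset.sum_const, card_univ,
      ← Nat.cast_smul_eq_nsmul ℝ, smul_smul, mul_inv_cancel₀ hn]

theorem gradStack_difference_bound {n d : ℕ} (L : ℝ) (hL : 0 < L)
    (f : Fin n → Vec d → ℝ) (hdiff : ∀ i, Differentiable ℝ (f i))
    (hlip : ∀ i, ∀ x y : Vec d, ‖gradient (f i) x - gradient (f i) y‖ ≤ L * ‖x - y‖)
    (x x' : Stacked n d) :
    ‖gradStack f x - gradStack f x'‖ ^ 2 ≤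
      2 * L ^ 2 * ‖x - stack n (blockAvg x)‖ ^ 2
      + 2 * L ^ 2 * ‖x' - stack n (blockAvg x')‖ ^ 2
      + n * L ^ 2 * ‖blockAvg x - blockAvg x'‖ ^ 2 := by
  set a : Fin n → Vec d := fun i => x i - blockAvg x with ha
  set b : Fin n → Vec d := fun i => x' i - blockAvg x' with hb
  set m : Vec d := blockAvg x - blockAvg x' with hm
  have h1 : ‖gradStack f x - gradStack f x'‖ ^ 2
      = ∑ i, ‖gradient (f i) (x i) - gradient (f i) (x' i)‖ ^ 2 := by
    rw [PiLp.norm_sq_eq_of_L2]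
    rfl
  have h2 : ∑ i, ‖gradient (f i) (x i) - gradient (f i) (x' i)‖ ^ 2
      ≤ L ^ 2 * ∑ i, ‖x i - x' i‖ ^ 2 := by
    rw [Finset.mul_sum]
    refine Finset.sum_le_sum fun i _ => ?_
    have := hlip i (x i) (x' i)
    calc ‖gradient (f i) (x i) - gradient (f i) (x' i)‖ ^ 2
        ≤ (L * ‖x i - x' i‖) ^ 2 := by
          apply pow_le_pow_left₀ (norm_nonneg _) this
      _ = L ^ 2 * ‖x i - x' i‖ ^ 2 := by ring
  have h3 : ∀ i, ‖x i - x' i‖ ^ 2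
      = ‖a i - b i‖ ^ 2 + 2 * inner ℝ (a i - b i) m + ‖m‖ ^ 2 := by
    intro i
    have : x i - x' i = (a i - b i) + m := by
      simp only [ha, hb, hm]; abel
    rw [this, @norm_add_sq_real]
  have hsab : ∑ i, (a i - b i) = (0 : Vec d) := by
    rw [Finset.sum_sub_distrib, sum_sub_blockAvg, sum_sub_blockAvg, sub_zero]
  have h4 : ∑ i, ‖x i - x' i‖ ^ 2
      = (∑ i, ‖a i - b i‖ ^ 2) + n * ‖m‖ ^ 2 := by
    simp only [h3]
    rw [Finset.sum_add_distrib, Finset.sum_add_distrib]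
    have : ∑ i, 2 * (inner ℝ (a i - b i) m : ℝ) = 0 := by
      rw [← Finset.mul_sum, ← sum_inner, hsab, inner_zero_left, mul_zero]
    rw [this, add_zero, Finset.sum_const, card_univ, Fintype.card_fin, nsmul_eq_mul]
  have h5 : ∑ i, ‖a i - b i‖ ^ 2 ≤ ∑ i, (2 * ‖a i‖ ^ 2 + 2 * ‖b i‖ ^ 2) := by
    refine Finset.sum_le_sum fun i _ => ?_
    calc ‖a i - b i‖ ^ 2 ≤ (‖a i‖ + ‖b i‖) ^ 2 := by
          apply pow_le_pow_left₀ (norm_nonneg _) (norm_sub_le _ _)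
      _ ≤ 2 * ‖a i‖ ^ 2 + 2 * ‖b i‖ ^ 2 := by nlinarith [sq_nonneg (‖a i‖ - ‖b i‖)]
  have hxa : ‖x - stack n (blockAvg x)‖ ^ 2 = ∑ i, ‖a i‖ ^ 2 := by
    rw [PiLp.norm_sq_eq_of_L2]; rfl
  have hxb : ‖x' - stack n (blockAvg x')‖ ^ 2 = ∑ i, ‖b i‖ ^ 2 := by
    rw [PiLp.norm_sq_eq_of_L2]; rfl
  have hL2 : (0:ℝ) ≤ L ^ 2 := sq_nonneg L
  calc ‖gradStack f x - gradStack f x'‖ ^ 2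
      ≤ L ^ 2 * ∑ i, ‖x i - x' i‖ ^ 2 := by rw [h1]; exact h2
    _ = L ^ 2 * ((∑ i, ‖a i - b i‖ ^ 2) + n * ‖m‖ ^ 2) := by rw [h4]
    _ ≤ L ^ 2 * ((∑ i, (2 * ‖a i‖ ^ 2 + 2 * ‖b i‖ ^ 2)) + n * ‖m‖ ^ 2) := by
        apply mul_le_mul_of_nonneg_left _ hL2
        exact add_le_add_left h5 _
    _ = 2 * L ^ 2 * (∑ i, ‖a i‖ ^ 2) + 2 * L ^ 2 * (∑ i, ‖b i‖ ^ 2)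
        + n * L ^ 2 * ‖m‖ ^ 2 := by
        rw [Finset.sum_add_distrib, ← Finset.mul_sum, ← Finset.mul_sum]; ring
    _ = _ := by rw [hxa, hxb]
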